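/- Let (X,d) be a metric space, μ a Borel measure on X, and N > 1 a real number. Assume (X,d,μ) satisfies the N-Brunn–Minkowski inequality. Let Ω ⊆ X be a nonempty bounded Borel set with 0 < μ(Ω) < ∞ and diameter d₀ = diam(Ω), let x₀ ∈ Ω and R > 0 be such that 0 < μ(B_{x₀}(R)) < ∞. Then the Minkowski content of Ω satisfies μ⁺(Ω) ≥ N · μ(Ω)^{(N−1)/N} · (μ(B_{x₀}(R))^{1/N} − μ(Ω)^{1/N}) / (d₀ + R). -/

import Mathlib

open MeasureTheory Metric Filter Set
open scoped Topology ENNReal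

/-- The constant `ω_N = π^{N/2} / Γ(1 + N/2)`. -/
noncomputable def omegaN (N : ℝ) : ℝ := Real.pi ^ (N / 2) / Real.Gamma (1 + N / 2)

/-- The `ε`-neighborhood `Ω_ε = {x : ∃ y ∈ Ω, d(x,y) < ε}`. -/
def eNbhd {X : Type*} [MetricSpace X] (Ω : Set X) (ε : ℝ) : Set X :=
  {x | ∃ y ∈ Ω, dist x y < ε}

/-- The Minkowski content `μ⁺(Ω) = liminf_{ε → 0⁺} μ(Ω_ε \ Ω)/ε`. -/
noncomputable def minkowskiContent {X : Type*} [MetricSpace X] [MeasurableSpace X]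
    (μ : Measure X) (Ω : Set X) : ℝ≥0∞ :=
  Filter.liminf (fun ε : ℝ => μ (eNbhd Ω ε \ Ω) / ENNReal.ofReal ε) (𝓝[>] (0 : ℝ))

/-- The `s`-interpolant set `Z_s(A,B)`. -/
def interpSet {X : Type*} [MetricSpace X] (s : ℝ) (A B : Set X) : Set X :=
  ⋃ x ∈ A, ⋃ y ∈ B,
    {z | dist x z = s * dist x y ∧ dist z y = (1 - s) * dist x y}

/-- The `N`-Brunn–Minkowski inequality:
`μ(Z_s(A,B))^{1/N} ≥ (1-s) μ(A)^{1/N} + s μ(B)^{1/N}`. -/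
def NBrunnMinkowski {X : Type*} [MetricSpace X] [MeasurableSpace X]
    (μ : Measure X) (N : ℝ) : Prop :=
  ∀ A B : Set X, MeasurableSet A → MeasurableSet B → 0 < μ A → 0 < μ B →
    ∀ s ∈ Set.Icc (0 : ℝ) 1,
      ENNReal.ofReal (1 - s) * μ A ^ (1 / N) + ENNReal.ofReal s * μ B ^ (1 / N)
        ≤ μ (interpSet s A B) ^ (1 / N)

lemma BM_key_real {N a b s : ℝ} (hN : 1 < N) (ha : 0 < a) (hab : a ≤ b) (hs0 : 0 ≤ s) :
    a ^ N + N * a ^ (N - 1) * (s * (b - a)) ≤ (a + s * (b - a)) ^ N := by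
  set t := s * (b - a) / a with htdef
  have ht : 0 ≤ t := div_nonneg (mul_nonneg hs0 (sub_nonneg.mpr hab)) ha.le
  have h1 : a + s * (b - a) = a * (1 + t) := by rw [htdef]; field_simp
  have hbern : 1 + N * t ≤ (1 + t) ^ N :=
    one_add_mul_self_le_rpow_one_add (by linarith) hN.le
  have h2 : (a * (1 + t)) ^ N = a ^ N * (1 + t) ^ N :=
    Real.mul_rpow ha.le (by linarith)
  have h4 : a ^ (N - 1) * a = a ^ N := by
    rw [← Real.rpow_add_one ha.ne']; norm_num
  have h5 : a ^ N * t = a ^ (N - 1) * (s * (b - a)) := by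
    rw [htdef, ← h4]; field_simp
  have h3 : a ^ N * (1 + N * t) ≤ a ^ N * (1 + t) ^ N :=
    mul_le_mul_of_nonneg_left hbern (Real.rpow_nonneg ha.le _)
  calc a ^ N + N * a ^ (N - 1) * (s * (b - a)) = a ^ N * (1 + N * t) := by
        rw [mul_add, mul_one]; rw [show N * a ^ (N-1) * (s*(b-a)) = N * (a^(N-1) * (s*(b-a))) by ring, ← h5]; ring
    _ ≤ a ^ N * (1 + t) ^ N := h3
    _ = (a * (1 + t)) ^ N := h2.symm
    _ = (a + s * (b - a)) ^ N := by rw [h1]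
theorem minkowskiContent_lower_bound
    {X : Type*} [MetricSpace X] [MeasurableSpace X] [BorelSpace X]
    (μ : Measure X) (N : ℝ) (hN : 1 < N)
    (hBM : NBrunnMinkowski μ N)
    (Ω : Set X) (hne : Ω.Nonempty) (hbdd : Bornology.IsBounded Ω)
    (hmeas : MeasurableSet Ω) (h0 : 0 < μ Ω) (hfinΩ : μ Ω < ⊤)
    (x₀ : X) (hx₀ : x₀ ∈ Ω) (R : ℝ) (hR : 0 < R)
    (hpos : 0 < μ (Metric.ball x₀ R)) (hfin : μ (Metric.ball x₀ R) < ⊤) :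
    ENNReal.ofReal (N * (μ Ω).toReal ^ ((N - 1) / N) *
        ((μ (Metric.ball x₀ R)).toReal ^ (1 / N) - (μ Ω).toReal ^ (1 / N)) /
        (Metric.diam Ω + R))
      ≤ minkowskiContent μ Ω := by
  have hNpos : (0:ℝ) < N := by linarith
  set D := Metric.diam Ω + R with hDdef
  have hD : 0 < D := add_pos_of_nonneg_of_pos Metric.diam_nonneg hR
  set α := (μ Ω).toReal with hαdef
  set β := (μ (Metric.ball x₀ R)).toReal with hβdef
  have hα0 : 0 < α := ENNReal.toReal_pos h0.ne' hfinΩ.ne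
  have hβ0 : 0 < β := ENNReal.toReal_pos hpos.ne' hfin.ne
  set a := α ^ (1/N) with hadef
  set b := β ^ (1/N) with hbdef
  have ha0 : 0 < a := Real.rpow_pos_of_pos hα0 _
  have hb0 : 0 < b := Real.rpow_pos_of_pos hβ0 _
  by_cases hab : b ≤ a
  · have hc : N * α ^ ((N-1)/N) * (b - a) / D ≤ 0 := by
      apply div_nonpos_of_nonpos_of_nonneg _ hD.le
      exact mul_nonpos_of_nonneg_of_nonpos (by positivity) (by linarith)
    rw [ENNReal.ofReal_eq_zero.mpr hc]
    exact zero_le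
  push_neg at hab
  have haN : a ^ N = α := by
    rw [hadef, ← Real.rpow_mul hα0.le, one_div_mul_cancel hNpos.ne', Real.rpow_one]
  have haN1 : a ^ (N - 1) = α ^ ((N - 1)/N) := by
    rw [hadef, ← Real.rpow_mul hα0.le]
    congr 1
    field_simp
  have hAeq : μ Ω = ENNReal.ofReal α := (ENNReal.ofReal_toReal hfinΩ.ne).symm
  have hBeq : μ (Metric.ball x₀ R) = ENNReal.ofReal β := (ENNReal.ofReal_toReal hfin.ne).symm
  rw [minkowskiContent]
  apply Filter.le_liminf_of_le (by isBoundedDefault)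
  filter_upwards [Ioo_mem_nhdsGT hD] with ε hε
  obtain ⟨hε0, hεD⟩ := hε
  set s := ε / D with hsdef
  have hs0 : 0 < s := div_pos hε0 hD
  have hs1 : s < 1 := (div_lt_one hD).mpr hεD
  -- the interpolant set is contained in the ε-neighborhood
  have hsub : interpSet s Ω (Metric.ball x₀ R) ⊆ eNbhd Ω ε := by
    intro z hz
    simp only [interpSet, Set.mem_iUnion, Set.mem_setOf_eq] at hz
    obtain ⟨x, hx, y, hy, hz1, _⟩ := hz
    refine ⟨x, hx, ?_⟩
    have hxy : dist x y < D := by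
      calc dist x y ≤ dist x x₀ + dist x₀ y := dist_triangle _ _ _
        _ < Metric.diam Ω + R :=
          add_lt_add_of_le_of_lt (Metric.dist_le_diam_of_mem hbdd hx hx₀) (mem_ball'.mp hy)
    calc dist z x = s * dist x y := by rw [dist_comm, hz1]
      _ < s * D := by
          apply mul_lt_mul_of_pos_left hxy hs0
      _ = ε := by rw [hsdef]; field_simp
  -- Brunn–Minkowski
  have hBMi := hBM Ω (Metric.ball x₀ R) hmeas measurableSet_ball h0 hpos s ⟨hs0.le, hs1.le⟩
  have hw0 : 0 < (1 - s) * a + s * b :=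
    add_pos (mul_pos (by linarith) ha0) (mul_pos hs0 hb0)
  have hLHS : ENNReal.ofReal (1-s) * (μ Ω) ^ (1/N)
      + ENNReal.ofReal s * (μ (Metric.ball x₀ R)) ^ (1/N)
      = ENNReal.ofReal ((1-s) * a + s * b) := by
    rw [hAeq, hBeq, ENNReal.ofReal_rpow_of_pos hα0, ENNReal.ofReal_rpow_of_pos hβ0,
      ← ENNReal.ofReal_mul (by linarith), ← ENNReal.ofReal_mul hs0.le,
      ← ENNReal.ofReal_add (mul_nonneg (by linarith) ha0.le) (mul_nonneg hs0.le hb0.le)]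
  rw [hLHS] at hBMi
  have hZ : ENNReal.ofReal (((1-s) * a + s * b) ^ N)
      ≤ μ (interpSet s Ω (Metric.ball x₀ R)) := by
    have h1 := ENNReal.rpow_le_rpow hBMi hNpos.le
    rwa [← ENNReal.rpow_mul, one_div_mul_cancel hNpos.ne', ENNReal.rpow_one,
      ENNReal.ofReal_rpow_of_pos hw0] at h1
  have hchain : ENNReal.ofReal (((1-s) * a + s * b) ^ N) ≤ μ (eNbhd Ω ε) :=
    hZ.trans (measure_mono hsub)
  -- the real inequality
  have hkey := BM_key_real hN ha0 hab.le hs0.le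
  have hreal : N * α ^ ((N-1)/N) * (b - a) / D * ε + α ≤ ((1-s) * a + s * b) ^ N := by
    have e1 : (1-s) * a + s * b = a + s * (b - a) := by ring
    have e2 : N * α ^ ((N-1)/N) * (b - a) / D * ε = N * a ^ (N-1) * (s * (b - a)) := by
      rw [haN1, hsdef]; field_simp
    rw [e1, e2, ← haN]
    linarith [hkey]
  -- put everything together
  rw [ENNReal.le_div_iff_mul_le (Or.inl (by simp [hε0])) (Or.inl ENNReal.ofReal_ne_top)]
  have hcnn : 0 ≤ N * α ^ ((N-1)/N) * (b - a) / D := by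
    apply div_nonneg _ hD.le
    apply mul_nonneg (by positivity) (by linarith)
  calc ENNReal.ofReal (N * α ^ ((N-1)/N) * (b - a) / D) * ENNReal.ofReal ε
      = ENNReal.ofReal (N * α ^ ((N-1)/N) * (b - a) / D * ε) :=
        (ENNReal.ofReal_mul hcnn).symm
    _ ≤ ENNReal.ofReal (((1-s) * a + s * b) ^ N - α) :=
        ENNReal.ofReal_le_ofReal (by linarith [hreal])
    _ = ENNReal.ofReal (((1-s) * a + s * b) ^ N) - ENNReal.ofReal α :=
        ENNReal.ofReal_sub _ hα0.le
    _ ≤ μ (eNbhd Ω ε) - μ Ω := by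
        apply tsub_le_tsub hchain hAeq.le
    _ ≤ μ (eNbhd Ω ε \ Ω) := le_measure_diff
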